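/- arXiv:1008.3427 — 10 statements merged into one kernel-verified Lean document; each statement's English description precedes it below -/
import Mathlib

section
/- For all real numbers λ > 0 and y > 0, e^y > (λy + 1)^{1/λ} · (1 + y - λy²/((λy+1)·log(λy+1))). -/
theorem stmt_1 (l y : ℝ) (hl : 0 < l) (hy : 0 < y) :
    Real.exp y >
      (l * y + 1) ^ (1 / l) *
        (1 + y - l * y ^ 2 / ((l * y + 1) * Real.log (l * y + 1))) := by
  set x := l * y with hx
  have hx0 : 0 < x := mul_pos hl hy
  set t := x + 1 with ht
  have ht1 : 1 < t := by simp only [ht]; linarith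
  have ht0 : 0 < t := by linarith
  set s := Real.log t with hs
  have hs0 : 0 < s := Real.log_pos ht1
  have hes : Real.exp s = t := Real.exp_log ht0
  have hsinh : s ≤ Real.exp (s/2) - Real.exp (-(s/2)) := by
    have h := (Real.self_lt_sinh_iff (x := s/2)).2 (by positivity)
    rw [Real.sinh_eq] at h
    linarith
  have h1 : Real.exp (s/2) * Real.exp (s/2) = t := by
    rw [← Real.exp_add]; rw [show s/2 + s/2 = s by ring, hes]
  have h2 : Real.exp (-(s/2)) * Real.exp (s/2) = 1 := by
    rw [← Real.exp_add]; norm_num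
  have h3 : s * Real.exp (s/2) ≤ t - 1 := by
    have := mul_le_mul_of_nonneg_right hsinh (le_of_lt (Real.exp_pos (s/2)))
    nlinarith [this]
  have hkey : t * s^2 ≤ x^2 := by
    nlinarith [Real.exp_pos (s/2), mul_nonneg hs0.le (Real.exp_pos (s/2)).le, h3, h1]
  have hsx : s < x := by
    have := Real.log_lt_sub_one_of_pos ht0 (ne_of_gt ht1)
    rw [← hs] at this; linarith
  have hrw : t ^ (1/l) = Real.exp (s/l) := by
    rw [Real.rpow_def_of_pos ht0, ← hs]; ring_nf
  have hyl : 0 < y - s/l := by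
    have h : s / l < y := (div_lt_iff₀ hl).mpr (by nlinarith [hsx])
    linarith
  have hexp : 1 + (y - s/l) < Real.exp (y - s/l) := by
    have := Real.add_one_lt_exp (ne_of_gt hyl); linarith
  have hF : s/l ≤ l * y^2 / (t * s) := by
    rw [div_le_div_iff₀ hl (by positivity)]
    nlinarith [hkey]
  have hrhs : (l*y+1) ^ (1/l) * (1 + y - l * y ^ 2 / ((l*y+1) * Real.log (l*y+1)))
      ≤ Real.exp (s/l) * (1 + (y - s/l)) := by
    rw [show l*y+1 = t from rfl, hrw]
    have : 1 + y - l * y ^ 2 / (t * s) ≤ 1 + (y - s/l) := by linarith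
    exact mul_le_mul_of_nonneg_left (by linarith) (Real.exp_pos _).le
  calc (l*y+1) ^ (1/l) * (1 + y - l * y ^ 2 / ((l*y+1) * Real.log (l*y+1)))
      ≤ Real.exp (s/l) * (1 + (y - s/l)) := hrhs
    _ < Real.exp (s/l) * Real.exp (y - s/l) :=
        (mul_lt_mul_of_pos_left hexp (Real.exp_pos _))
    _ = Real.exp y := by rw [← Real.exp_add]; ring_nf
end

section
/- For all λ > 0 and y > 0, the relative error (e^y - (λy+1)^{1/λ})/(λy+1)^{1/λ} is bounded below by y·(1 - λy/((λy+1)·log(λy+1))), and this lower bound is positive. -/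
open Real

lemma aux_deriv (x : ℝ) (hx : x ≠ 0) :
    HasDerivAt (fun x : ℝ => x - x⁻¹ - 2 * Real.log x) (1 - (-(x ^ 2)⁻¹) - 2 * x⁻¹) x := by
  have h1 : HasDerivAt (fun x : ℝ => x) 1 x := hasDerivAt_id x
  have h2 : HasDerivAt (fun x : ℝ => x⁻¹) (-(x ^ 2)⁻¹) x := hasDerivAt_inv hx
  have h3 : HasDerivAt (fun x : ℝ => 2 * Real.log x) (2 * x⁻¹) x :=
    (Real.hasDerivAt_log hx).const_mul 2
  exact (h1.sub h2).sub h3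

lemma two_log_lt (s : ℝ) (hs : 1 < s) : 2 * Real.log s < s - s⁻¹ := by
  have key : StrictMonoOn (fun x : ℝ => x - x⁻¹ - 2 * Real.log x) (Set.Ici 1) := by
    apply strictMonoOn_of_deriv_pos (convex_Ici 1)
    · have hne : ∀ x ∈ Set.Ici (1:ℝ), x ≠ 0 := fun x hx =>
        ne_of_gt (lt_of_lt_of_le one_pos (Set.mem_Ici.mp hx))
      exact ((continuousOn_id.sub (continuousOn_id.inv₀ hne)).sub
        (continuousOn_const.mul (Real.continuousOn_log.mono fun x hx => hne x hx)))
    · intro x hx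
      rw [interior_Ici] at hx
      have hx1 : (1:ℝ) < x := hx
      have hx0 : (0:ℝ) < x := lt_trans one_pos hx1
      rw [(aux_deriv x hx0.ne').deriv]
      have hinv : x⁻¹ < 1 := inv_lt_one_of_one_lt₀ hx1
      have hinv0 : 0 < x⁻¹ := inv_pos.mpr hx0
      have hsq : (x ^ 2)⁻¹ = x⁻¹ ^ 2 := (inv_pow x 2).symm
      nlinarith [sq_nonneg (1 - x⁻¹)]
  have h1 : (1:ℝ) ∈ Set.Ici (1:ℝ) := Set.mem_Ici.mpr le_rfl
  have hs1 : s ∈ Set.Ici (1:ℝ) := Set.mem_Ici.mpr hs.le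
  have := key h1 hs1 hs
  simp only [Real.log_one, inv_one] at this
  linarith

lemma sqrt_log_lt (t : ℝ) (ht : 1 < t) : Real.sqrt t * Real.log t < t - 1 := by
  set s := Real.sqrt t with hsdef
  have ht0 : (0:ℝ) < t := lt_trans one_pos ht
  have hs1 : 1 < s := by
    rw [hsdef, show (1:ℝ) = Real.sqrt 1 by simp]
    exact Real.sqrt_lt_sqrt zero_le_one ht
  have hs0 : 0 < s := lt_trans one_pos hs1
  have hts : t = s ^ 2 := (Real.sq_sqrt ht0.le).symm
  have hlog : Real.log t = 2 * Real.log s := by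
    rw [hts, Real.log_pow]; push_cast; ring
  have key := two_log_lt s hs1
  rw [hlog, hts]
  have : s * (s - s⁻¹) = s ^ 2 - 1 := by field_simp
  nlinarith

theorem stmt_2 (l y : ℝ) (hl : 0 < l) (hy : 0 < y) :
    (Real.exp y - (l * y + 1) ^ (1 / l)) / (l * y + 1) ^ (1 / l) >
        y * (1 - l * y / ((l * y + 1) * Real.log (l * y + 1))) ∧
      y * (1 - l * y / ((l * y + 1) * Real.log (l * y + 1))) > 0 := by
  set t := l * y + 1 with htdef
  have hly : 0 < l * y := mul_pos hl hy
  have ht1 : 1 < t := by simp [htdef]; linarith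
  have ht0 : (0:ℝ) < t := lt_trans one_pos ht1
  set L := Real.log t with hLdef
  have hL0 : 0 < L := Real.log_pos ht1
  -- L < l*y
  have h1 : L < l * y := by
    have := Real.log_lt_sub_one_of_pos ht0 (ne_of_gt ht1)
    simpa [htdef] using this
  -- l*y < t*L
  have h2 : l * y < t * L := by
    have hinv0 : (0:ℝ) < t⁻¹ := inv_pos.mpr ht0
    have hinvne : t⁻¹ ≠ 1 := by
      intro h; rw [inv_eq_one] at h; exact (ne_of_gt ht1) h
    have := Real.log_lt_sub_one_of_pos hinv0 hinvne
    rw [Real.log_inv] at this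
    have hL' : 1 - t⁻¹ < L := by linarith
    have : t * (1 - t⁻¹) < t * L := by
      exact (mul_lt_mul_iff_right₀ ht0).mpr hL'
    have hexp : t * (1 - t⁻¹) = t - 1 := by field_simp
    rw [hexp] at this
    linarith [this, show t - 1 = l * y by rw [htdef]; ring]
  -- t * L^2 < (l*y)^2
  have h3 : t * L ^ 2 < (l * y) ^ 2 := by
    have hs := sqrt_log_lt t ht1
    have hs0 : 0 < Real.sqrt t := Real.sqrt_pos.mpr ht0
    have hsl : 0 < Real.sqrt t * L := mul_pos hs0 hL0
    have hty : Real.sqrt t * L < l * y := by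
      rw [htdef] at hs ⊢; linarith [hs, show l * y + 1 - 1 = l * y by ring]
    have hmul : Real.sqrt t * L * (Real.sqrt t * L) < (l * y) * (l * y) := by
      nlinarith [hsl, hty]
    have hsq : Real.sqrt t * L * (Real.sqrt t * L) = t * L ^ 2 := by
      rw [show Real.sqrt t * L * (Real.sqrt t * L) = Real.sqrt t * Real.sqrt t * L ^ 2 by ring,
        Real.mul_self_sqrt ht0.le]
    nlinarith
  -- rewrite the rpow
  have hrpow : t ^ (1 / l) = Real.exp (L / l) := by
    rw [Real.rpow_def_of_pos ht0, ← hLdef]; ring_nf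
  have hE0 : 0 < Real.exp (L / l) := Real.exp_pos _
  have hx0 : 0 < y - L / l := by
    have : L / l < y := (div_lt_iff₀ hl).mpr (by linarith [h1])
    linarith
  have hexpx : Real.exp (y - L / l) - 1 > y - L / l := by
    have := Real.add_one_lt_exp (ne_of_gt hx0)
    linarith
  have hratio : (Real.exp y - t ^ (1 / l)) / t ^ (1 / l) = Real.exp (y - L / l) - 1 := by
    rw [hrpow, Real.exp_sub]
    field_simp
  have htL0 : 0 < t * L := mul_pos ht0 hL0
  -- the bound comparison: y - L/l ≥ y * (1 - l*y/(t*L))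
  have hbound : y * (1 - l * y / (t * L)) ≤ y - L / l := by
    have key : L / l ≤ l * y ^ 2 / (t * L) := by
      rw [div_le_div_iff₀ hl htL0]
      nlinarith [h3]
    have : y * (1 - l * y / (t * L)) = y - l * y ^ 2 / (t * L) := by
      field_simp
    linarith [key, this.le, this.ge]
  constructor
  · rw [hratio]
    calc y * (1 - l * y / (t * L)) ≤ y - L / l := hbound
      _ < Real.exp (y - L / l) - 1 := hexpx
  · have : l * y / (t * L) < 1 := (div_lt_one htL0).mpr h2
    have h4 : 0 < 1 - l * y / (t * L) := by linarith
    exact mul_pos hy h4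
end

section
/- For every y > 0, ((1+y)·log(1+y))² - y²·log(1+y) - y² > 0. -/
open Real

lemma key_log (x : ℝ) (hx : 1 ≤ x) : 2 * (x - 1) ≤ (x + 1) * Real.log x := by
  have hmono : MonotoneOn (fun x : ℝ => (x + 1) * Real.log x - 2 * (x - 1)) (Set.Ici 1) := by
    apply monotoneOn_of_deriv_nonneg (convex_Ici 1)
    · fun_prop (disch := intro x hx; simp at hx; positivity)
    · intro x hx
      rw [interior_Ici] at hx
      have hx0 : (0:ℝ) < x := lt_trans one_pos hx
      exact (((differentiable_id.add_const 1).differentiableAt.mul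
        (Real.differentiableAt_log hx0.ne')).sub
        ((differentiable_id.sub_const 1).const_mul 2).differentiableAt).differentiableWithinAt
    · intro x hx
      rw [interior_Ici] at hx
      have hx0 : (0:ℝ) < x := lt_trans one_pos hx
      have hd : deriv (fun x : ℝ => (x + 1) * Real.log x - 2 * (x - 1)) x
          = Real.log x + (x + 1) / x - 2 := by
        have h1 : HasDerivAt (fun x : ℝ => (x + 1) * Real.log x - 2 * (x - 1))
            (1 * Real.log x + (x + 1) * x⁻¹ - 2 * 1) x := by
          exact (((hasDerivAt_id x).add_const 1).mul (Real.hasDerivAt_log hx0.ne')).sub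
            (((hasDerivAt_id x).sub_const 1).const_mul 2)
        rw [h1.deriv]; field_simp
      rw [hd]
      have hlog : 1 - x⁻¹ ≤ Real.log x := Real.one_sub_inv_le_log_of_pos hx0
      have : (x + 1) / x = 1 + x⁻¹ := by field_simp
      rw [this]
      linarith
  have := hmono (Set.self_mem_Ici) (Set.mem_Ici.mpr hx) hx
  simpa using this

theorem stmt_3 (y : ℝ) (hy : 0 < y) :
    ((1 + y) * Real.log (1 + y)) ^ 2 - y ^ 2 * Real.log (1 + y) - y ^ 2 > 0 := by
  set L := Real.log (1 + y) with hL
  have h1 : 2 * y ≤ (2 + y) * L := by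
    have := key_log (1 + y) (by linarith)
    calc 2 * y = 2 * ((1 + y) - 1) := by ring
    _ ≤ ((1 + y) + 1) * Real.log (1 + y) := this
    _ = (2 + y) * L := by ring
  have h2 : L ≤ y := by
    have := Real.log_le_sub_one_of_pos (show (0:ℝ) < 1 + y by linarith)
    linarith
  nlinarith [sq_nonneg ((2 + y) * L - 2 * y), sq_nonneg (y - L), mul_pos hy hy,
    sq_nonneg y, sq_nonneg L, mul_nonneg (sub_nonneg.mpr h1) (sub_nonneg.mpr h2)]
end

section
/- For every y > 0, 2·((1+y)·log(1+y))² - 3y² + 2(1+y)·log(1+y) - 2y > 0. -/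
lemma pade_log {x : ℝ} (hx : 1 ≤ x) : 2*(x-1)/(x+1) ≤ Real.log x := by
  have key : ∀ t : ℝ, 0 < t → HasDerivAt (fun s => Real.log s - 2*(s-1)/(s+1))
      (1/t - 4/(t+1)^2) t := by
    intro t ht
    have h1 : HasDerivAt Real.log (1/t) t := by
      simpa [one_div] using Real.hasDerivAt_log ht.ne'
    have hne : t + 1 ≠ 0 := by linarith
    have h2 : HasDerivAt (fun s : ℝ => 2*(s-1)/(s+1)) (4/(t+1)^2) t := by
      have := HasDerivAt.div (((hasDerivAt_id t).sub_const 1).const_mul 2)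
        ((hasDerivAt_id t).add_const 1) hne
      convert this using 1
      · rfl
      · rfl
      · funext s
        simp [Pi.div_apply]
      · simp only [id]
        ring
    exact h1.sub h2
  have mono : MonotoneOn (fun s => Real.log s - 2*(s-1)/(s+1)) (Set.Ici 1) := by
    apply monotoneOn_of_deriv_nonneg (convex_Ici 1)
    · apply ContinuousOn.sub
      · exact Real.continuousOn_log.mono (by intro t ht; simp at ht ⊢; intro h; linarith)
      · apply ContinuousOn.div (by fun_prop) (by fun_prop)
        intro t ht; simp at ht; intro h; linarith
    · intro t ht
      rw [interior_Ici] at ht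
      exact (key t (by simp at ht; linarith)).differentiableAt.differentiableWithinAt
    · intro t ht
      rw [interior_Ici] at ht
      simp only [Set.mem_Ioi] at ht
      have ht0 : 0 < t := by linarith
      rw [(key t ht0).deriv]
      have heq : 1/t - 4/(t+1)^2 = (t-1)^2/(t*(t+1)^2) := by
        field_simp; ring
      rw [heq]
      positivity
  have h0 := mono (by simp : (1:ℝ) ∈ Set.Ici 1) hx hx
  simp at h0
  linarith

theorem stmt_4 (y : ℝ) (hy : 0 < y) :
    2 * ((1 + y) * Real.log (1 + y)) ^ 2 - 3 * y ^ 2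
      + 2 * (1 + y) * Real.log (1 + y) - 2 * y > 0 := by
  have h1 : (0:ℝ) < 1 + y := by linarith
  have h2 : (0:ℝ) < 2 + y := by linarith
  have hlog : 2*y/(2+y) ≤ Real.log (1+y) := by
    have := pade_log (show (1:ℝ) ≤ 1 + y by linarith)
    have e : 2*((1+y)-1)/((1+y)+1) = 2*y/(2+y) := by ring_nf
    linarith [e ▸ this]
  have hlog' : 2*y ≤ (2+y) * Real.log (1+y) := by
    rw [div_le_iff₀ h2] at hlog
    linarith
  set L := (1 + y) * Real.log (1 + y) with hLdef
  have hLpos : 0 < L := mul_pos h1 (Real.log_pos (by linarith))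
  have hL : 2*y*(1+y) ≤ (2+y) * L := by
    have := mul_le_mul_of_nonneg_left hlog' (le_of_lt h1)
    calc 2*y*(1+y) = (1+y)*(2*y) := by ring
      _ ≤ (1+y)*((2+y)*Real.log (1+y)) := this
      _ = (2+y) * L := by rw [hLdef]; ring
  nlinarith [sq_nonneg ((2+y)*L - 2*y*(1+y)), mul_pos hy hy, mul_pos (mul_pos hy hy) hy,
    mul_nonneg (sub_nonneg.2 hL) (le_of_lt hLpos), mul_nonneg (sub_nonneg.2 hL) (le_of_lt hy),
    sq_nonneg L, mul_pos h2 h2]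
end

section
/- For every y > 0, 4·((1+y)·log(1+y))² + 4y(1+y)·log(1+y) - 6y² + 6(1+y)·log(1+y) - 6y > 0. -/
theorem stmt_5 (y : ℝ) (hy : 0 < y) :
    4 * ((1 + y) * Real.log (1 + y)) ^ 2 + 4 * y * (1 + y) * Real.log (1 + y)
      - 6 * y ^ 2 + 6 * (1 + y) * Real.log (1 + y) - 6 * y > 0 := by
  have h1 : (0:ℝ) < 1 + y := by linarith
  have h2 : Real.log (1/(1+y)) < 1/(1+y) - 1 := by
    apply Real.log_lt_sub_one_of_pos (by positivity)
    intro h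
    field_simp at h
    linarith
  rw [Real.log_div one_ne_zero (ne_of_gt h1), Real.log_one] at h2
  have hL : (1 + y) * Real.log (1 + y) > y := by
    have : Real.log (1+y) > y/(1+y) := by
      have : 1/(1+y) - 1 = -(y/(1+y)) := by field_simp; ring
      linarith [h2.trans_eq this]
    calc (1+y) * Real.log (1+y) > (1+y) * (y/(1+y)) := by
          exact mul_lt_mul_of_pos_left this h1
      _ = y := by field_simp
  nlinarith [hL, sq_nonneg ((1+y)*Real.log (1+y) - y)]
end

section
/- The Kamps weight function w₃(λ,x) = 1 - e^{-x/λ} is log-supermodular on (0,∞)×(0,∞): for all 0 < θ ≤ λ and 0 < x₁ ≤ x₂, w₃(θ,x₁)·w₃(λ,x₂) ≥ w₃(θ,x₂)·w₃(λ,x₁). -/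
theorem stmt_11 (θ l x₁ x₂ : ℝ) (hθ : 0 < θ) (hθl : θ ≤ l)
    (hx₁ : 0 < x₁) (hx : x₁ ≤ x₂) :
    (1 - Real.exp (-x₁ / θ)) * (1 - Real.exp (-x₂ / l)) ≥
      (1 - Real.exp (-x₂ / θ)) * (1 - Real.exp (-x₁ / l)) := by
  have hl : 0 < l := hθ.trans_le hθl
  set c := Real.exp (-x₁ / l) with hc
  set s := Real.exp (-(x₂ - x₁) / l) with hs
  have hcpos : 0 < c := Real.exp_pos _
  have hspos : 0 < s := Real.exp_pos _
  have hc1 : c ≤ 1 := Real.exp_le_one_iff.2 (div_nonpos_of_nonpos_of_nonneg (by linarith) hl.le)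
  have hs1 : s ≤ 1 := Real.exp_le_one_iff.2 (div_nonpos_of_nonpos_of_nonneg (by linarith) hl.le)
  have e1 : Real.exp (-x₁ / θ) = c ^ (l / θ) := by
    rw [hc, Real.rpow_def_of_pos (Real.exp_pos _), Real.log_exp]
    congr 1
    field_simp
  have e2 : Real.exp (-x₂ / θ) = c ^ (l / θ) * s ^ (l / θ) := by
    rw [hc, hs, Real.rpow_def_of_pos (Real.exp_pos _), Real.rpow_def_of_pos (Real.exp_pos _),
      Real.log_exp, Real.log_exp, ← Real.exp_add]
    congr 1
    field_simp
    ring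
  have e3 : Real.exp (-x₂ / l) = c * s := by
    rw [hc, hs, ← Real.exp_add]
    congr 1
    field_simp
    ring
  rw [e1, e2, e3]
  set k := l / θ with hk
  have hk1 : 1 ≤ k := (one_le_div hθ).2 hθl
  set A := c ^ k with hA
  set S := s ^ k with hS
  have hApos : 0 < A := Real.rpow_pos_of_pos hcpos _
  have hSpos : 0 < S := Real.rpow_pos_of_pos hspos _
  have hB1 : 1 + k * (s - 1) ≤ S := by
    have := one_add_mul_self_le_rpow_one_add (s := s - 1) (by linarith) hk1
    simpa using this
  have hB2 : A + k * A * ((1 - c) / c) ≤ 1 := by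
    have h := one_add_mul_self_le_rpow_one_add (s := (1 - c) / c) (le_trans (by norm_num) (div_nonneg (by linarith) hcpos.le)) hk1
    have h1c : (1 : ℝ) + (1 - c) / c = 1 / c := by field_simp; ring
    rw [h1c, Real.div_rpow zero_le_one hcpos.le, Real.one_rpow] at h
    have h2 := mul_le_mul_of_nonneg_left h hApos.le
    have heq : A * (1 / c ^ k) = 1 := by rw [hA]; field_simp
    nlinarith [h2, heq]
  have key : A * ((1 - S) * (1 - c)) ≤ c * ((1 - s) * (1 - A)) := by
    have h1 : A * ((1 - S) * (1 - c)) ≤ A * (k * (1 - s) * (1 - c)) := by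
      apply mul_le_mul_of_nonneg_left _ hApos.le
      have h : 1 - S ≤ k * (1 - s) := by nlinarith
      nlinarith [mul_le_mul_of_nonneg_right h (by linarith : (0:ℝ) ≤ 1 - c)]
    have h2 : A * (k * (1 - s) * (1 - c)) ≤ c * ((1 - s) * (1 - A)) := by
      have hfac : k * A * (1 - c) ≤ c * (1 - A) := by
        have h := mul_le_mul_of_nonneg_left hB2 hcpos.le
        have hcc : c * (A + k * A * ((1 - c) / c)) = c * A + k * A * (1 - c) := by
          field_simp
        nlinarith
      nlinarith [mul_le_mul_of_nonneg_right hfac (by linarith : (0:ℝ) ≤ 1 - s)]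
    linarith
  nlinarith [key]
end

section
/- The function w₅(λ,x) = ((1+λ)^x - 1)/(xλ) is log-supermodular on (0,∞)×(0,∞): for all 0 < θ ≤ λ and 0 < x₁ ≤ x₂, w₅(θ,x₁)·w₅(λ,x₂) ≥ w₅(θ,x₂)·w₅(λ,x₁). -/
open Real Set

-- ψ(u) = u * log u / (u - 1) has derivative (u - 1 - log u)/(u-1)^2 at u > 1
lemma psi_hasDeriv {u : ℝ} (hu : 1 < u) :
    HasDerivAt (fun u : ℝ => u * Real.log u / (u - 1))
      ((u - 1 - Real.log u) / (u - 1) ^ 2) u := by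
  have h0 : (0:ℝ) < u := by linarith
  have hne : u - 1 ≠ 0 := by linarith
  have h1 : HasDerivAt (fun u : ℝ => u * Real.log u) (Real.log u + 1) u := by
    have := (hasDerivAt_id u).fun_mul (Real.hasDerivAt_log h0.ne')
    refine this.congr_deriv ?_
    simp only [id, one_mul, mul_inv_cancel₀ h0.ne']
  have h2 : HasDerivAt (fun u : ℝ => u - 1) 1 u := (hasDerivAt_id u).sub_const 1
  have := h1.fun_div h2 hne
  refine this.congr_deriv ?_
  ring

lemma psi_mono : MonotoneOn (fun u : ℝ => u * Real.log u / (u - 1)) (Set.Ioi 1) := by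
  have hint : interior (Set.Ioi (1:ℝ)) = Set.Ioi 1 := interior_Ioi
  apply monotoneOn_of_hasDerivWithinAt_nonneg (convex_Ioi 1)
    (f' := fun u => (u - 1 - Real.log u) / (u - 1) ^ 2)
  · intro u hu
    exact ((psi_hasDeriv hu).differentiableAt).continuousAt.continuousWithinAt
  · intro u hu
    rw [hint] at hu ⊢
    exact (psi_hasDeriv hu).hasDerivWithinAt
  · intro u hu
    rw [hint] at hu
    have hu : (1:ℝ) < u := hu
    have h1 : Real.log u ≤ u - 1 := Real.log_le_sub_one_of_pos (by linarith)
    have h2 : (0:ℝ) ≤ (u - 1)^2 := sq_nonneg _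
    exact div_nonneg (by linarith) h2

lemma one_lt_rpow' {c x : ℝ} (hc : 1 < c) (hx : 0 < x) : 1 < c ^ x :=
  Real.one_lt_rpow_iff_of_pos (by linarith) |>.2 (Or.inl ⟨hc, hx⟩)

lemma deriv_piece {c x : ℝ} (hc : 1 < c) (hx : 0 < x) :
    HasDerivAt (fun x => Real.log (c ^ x - 1))
      ((c ^ x * Real.log (c ^ x) / (c ^ x - 1)) / x) x := by
  have h0 : (0:ℝ) < c := by linarith
  have h1 : 1 < c ^ x := one_lt_rpow' hc hx
  have hD : HasDerivAt (fun x => c ^ x - 1) (c ^ x * Real.log c) x :=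
    ((Real.hasStrictDerivAt_const_rpow h0 x).hasDerivAt).sub_const 1
  have := hD.log (by linarith)
  have hxne : x ≠ 0 := hx.ne'
  have hne : c ^ x - 1 ≠ 0 := by linarith
  convert this using 1
  rw [Real.log_rpow h0]
  field_simp

lemma key_mono {a b : ℝ} (ha : 1 < a) (hab : a ≤ b) :
    MonotoneOn (fun x : ℝ => Real.log (b ^ x - 1) - Real.log (a ^ x - 1)) (Set.Ioi 0) := by
  have hb : 1 < b := lt_of_lt_of_le ha hab
  have hint : interior (Set.Ioi (0:ℝ)) = Set.Ioi 0 := interior_Ioi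
  refine monotoneOn_of_hasDerivWithinAt_nonneg (convex_Ioi 0)
    (f' := fun x => (b ^ x * Real.log (b ^ x) / (b ^ x - 1)) / x
      - (a ^ x * Real.log (a ^ x) / (a ^ x - 1)) / x) ?_ ?_ ?_
  · intro x hx
    exact (((deriv_piece hb hx).sub (deriv_piece ha hx)).differentiableAt).continuousAt.continuousWithinAt
  · intro x hx
    rw [hint] at hx ⊢
    exact ((deriv_piece hb (Set.mem_Ioi.1 hx)).sub (deriv_piece ha hx)).hasDerivWithinAt
  · intro x hx
    rw [hint] at hx
    have hx : (0:ℝ) < x := hx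
    have h1 : 1 < a ^ x := one_lt_rpow' ha hx
    have h2 : a ^ x ≤ b ^ x := Real.rpow_le_rpow (by linarith) hab hx.le
    have := psi_mono (Set.mem_Ioi.2 h1) (Set.mem_Ioi.2 (lt_of_lt_of_le h1 h2)) h2
    simp only [sub_nonneg]
    gcongr

lemma key {a b x₁ x₂ : ℝ} (ha : 1 < a) (hab : a ≤ b) (hx₁ : 0 < x₁) (hx : x₁ ≤ x₂) :
    (a ^ x₂ - 1) * (b ^ x₁ - 1) ≤ (a ^ x₁ - 1) * (b ^ x₂ - 1) := by
  have hb : 1 < b := lt_of_lt_of_le ha hab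
  have hx₂ : 0 < x₂ := lt_of_lt_of_le hx₁ hx
  have hF := key_mono ha hab (Set.mem_Ioi.2 hx₁) (Set.mem_Ioi.2 hx₂) hx
  have hA1 : (0:ℝ) < a ^ x₁ - 1 := by have := one_lt_rpow' ha hx₁; linarith
  have hA2 : (0:ℝ) < a ^ x₂ - 1 := by have := one_lt_rpow' ha hx₂; linarith
  have hB1 : (0:ℝ) < b ^ x₁ - 1 := by have := one_lt_rpow' hb hx₁; linarith
  have hB2 : (0:ℝ) < b ^ x₂ - 1 := by have := one_lt_rpow' hb hx₂; linarith
  rw [← Real.log_le_log_iff (by positivity) (by positivity),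
    Real.log_mul hA2.ne' hB1.ne', Real.log_mul hA1.ne' hB2.ne']
  simp only at hF
  linarith

theorem stmt_12 (θ l x₁ x₂ : ℝ) (hθ : 0 < θ) (hθl : θ ≤ l)
    (hx₁ : 0 < x₁) (hx : x₁ ≤ x₂) :
    (((1 + θ) ^ x₁ - 1) / (x₁ * θ)) * (((1 + l) ^ x₂ - 1) / (x₂ * l)) ≥
      (((1 + θ) ^ x₂ - 1) / (x₂ * θ)) * (((1 + l) ^ x₁ - 1) / (x₁ * l)) := by
  have hl : 0 < l := lt_of_lt_of_le hθ hθl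
  have hx₂ : 0 < x₂ := lt_of_lt_of_le hx₁ hx
  have ha : (1:ℝ) < 1 + θ := by linarith
  have hab : (1:ℝ) + θ ≤ 1 + l := by linarith
  have hkey := key ha hab hx₁ hx
  rw [ge_iff_le, div_mul_div_comm, div_mul_div_comm,
    div_le_div_iff₀ (by positivity) (by positivity)]
  nlinarith [mul_pos (mul_pos hx₁ hθ) (mul_pos hx₂ hl), hkey,
    mul_le_mul_of_nonneg_right hkey (le_of_lt (mul_pos (mul_pos hx₁ hθ) (mul_pos hx₂ hl)))]
end

section
/- The function w₆(λ,x) = xλ/log(1+xλ) is log-supermodular on (0,∞)×(0,∞): for all 0 < θ ≤ λ and 0 < x₁ ≤ x₂, w₆(θ,x₁)·w₆(λ,x₂) ≥ w₆(θ,x₂)·w₆(λ,x₁). -/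
open Real

/-- Core inequality: for `c ≥ 1`, `s > 0`, `c*(1+s)*log(1+s) ≤ (1+c*s)*log(1+c*s)`. -/
lemma core_ineq (s : ℝ) (hs : 0 < s) {c : ℝ} (hc : 1 ≤ c) :
    c * ((1 + s) * Real.log (1 + s)) ≤ (1 + c * s) * Real.log (1 + c * s) := by
  set K : ℝ := (1 + s) * Real.log (1 + s) with hK
  set F : ℝ → ℝ := fun t => (1 + t * s) * Real.log (1 + t * s) - t * K with hF
  have hpos : ∀ t : ℝ, 1 ≤ t → (0:ℝ) < 1 + t * s := by
    intro t ht
    nlinarith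
  have hderiv : ∀ t : ℝ, 1 ≤ t →
      HasDerivAt F (s * Real.log (1 + t * s) + (1 + t * s) * (s / (1 + t * s)) - K) t := by
    intro t ht
    have h1 : HasDerivAt (fun u : ℝ => 1 + u * s) s t := by
      simpa using (hasDerivAt_id t).mul_const s |>.const_add 1
    have hne : (1 + t * s) ≠ 0 := (hpos t ht).ne'
    have hlog : HasDerivAt (fun u : ℝ => Real.log (1 + u * s)) (s / (1 + t * s)) t :=
      h1.log hne
    have hmul := h1.mul hlog
    have hlin : HasDerivAt (fun u : ℝ => u * K) K t := by
      simpa using (hasDerivAt_id t).mul_const K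
    exact hmul.sub hlin
  have hF1 : F 1 = 0 := by simp [F, hK]
  have hmono : MonotoneOn F (Set.Ici 1) := by
    apply monotoneOn_of_deriv_nonneg (convex_Ici 1)
    · intro t ht
      exact ((hderiv t ht).continuousAt).continuousWithinAt
    · intro t ht
      rw [interior_Ici] at ht
      exact (hderiv t ht.le).differentiableAt.differentiableWithinAt
    · intro t ht
      rw [interior_Ici] at ht
      have ht1 : (1:ℝ) ≤ t := ht.le
      rw [(hderiv t ht1).deriv]
      have hne : (1 + t * s) ≠ 0 := (hpos t ht1).ne'
      rw [mul_div_cancel₀ _ hne]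
      have hlog1 : Real.log (1 + s) ≤ Real.log (1 + t * s) := by
        apply Real.log_le_log (by linarith)
        nlinarith
      have hlogs : Real.log (1 + s) ≤ s := by
        have := Real.log_le_sub_one_of_pos (x := 1 + s) (by linarith)
        linarith
      have hlogpos : 0 ≤ Real.log (1 + s) :=
        Real.log_nonneg (by linarith)
      nlinarith
  have := hmono (Set.self_mem_Ici) (Set.mem_Ici.mpr hc) hc
  rw [hF1] at this
  simp only [F] at this
  simp only [hK] at this ⊢
  linarith

/-- The ratio `log(1+c*s)/log(1+s)` is antitone in `s > 0` for `c ≥ 1`. -/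
lemma ratio_antitone {c : ℝ} (hc : 1 ≤ c) :
    AntitoneOn (fun s : ℝ => Real.log (1 + c * s) / Real.log (1 + s)) (Set.Ioi 0) := by
  set G : ℝ → ℝ := fun s => Real.log (1 + c * s) / Real.log (1 + s) with hG
  have hpos : ∀ s : ℝ, 0 < s → (0:ℝ) < 1 + s := fun s hs => by linarith
  have hcpos : ∀ s : ℝ, 0 < s → (0:ℝ) < 1 + c * s := by
    intro s hs; nlinarith
  have hlogpos : ∀ s : ℝ, 0 < s → (0:ℝ) < Real.log (1 + s) := by
    intro s hs; exact Real.log_pos (by linarith)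
  have hderiv : ∀ s : ℝ, 0 < s →
      HasDerivAt G ((c / (1 + c * s) * Real.log (1 + s) -
        Real.log (1 + c * s) * (1 / (1 + s))) / (Real.log (1 + s))^2) s := by
    intro s hs
    have h1 : HasDerivAt (fun u : ℝ => 1 + c * u) c s := by
      simpa using ((hasDerivAt_id s).const_mul c).const_add 1
    have h2 : HasDerivAt (fun u : ℝ => 1 + u) 1 s := by
      simpa using (hasDerivAt_id s).const_add 1
    have hlog1 : HasDerivAt (fun u : ℝ => Real.log (1 + c * u)) (c / (1 + c * s)) s :=
      h1.log (hcpos s hs).ne'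
    have hlog2 : HasDerivAt (fun u : ℝ => Real.log (1 + u)) (1 / (1 + s)) s :=
      h2.log (hpos s hs).ne'
    exact hlog1.div hlog2 (hlogpos s hs).ne'
  apply antitoneOn_of_deriv_nonpos (convex_Ioi 0)
  · intro s hs
    exact ((hderiv s hs).continuousAt).continuousWithinAt
  · intro s hs
    rw [interior_Ioi] at hs
    exact (hderiv s hs).differentiableAt.differentiableWithinAt
  · intro s hs
    rw [interior_Ioi] at hs
    rw [(hderiv s hs).deriv]
    apply div_nonpos_of_nonpos_of_nonneg _ (sq_nonneg _)
    rw [sub_nonpos]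
    rw [div_mul_eq_mul_div, mul_one_div, div_le_div_iff₀ (hcpos s hs) (hpos s hs)]
    have := core_ineq s hs hc
    nlinarith

theorem stmt_13 (θ l x₁ x₂ : ℝ) (hθ : 0 < θ) (hθl : θ ≤ l)
    (hx₁ : 0 < x₁) (hx : x₁ ≤ x₂) :
    (x₁ * θ / Real.log (1 + x₁ * θ)) * (x₂ * l / Real.log (1 + x₂ * l)) ≥
      (x₂ * θ / Real.log (1 + x₂ * θ)) * (x₁ * l / Real.log (1 + x₁ * l)) := by
  have hx₂ : 0 < x₂ := lt_of_lt_of_le hx₁ hx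
  have hl : 0 < l := lt_of_lt_of_le hθ hθl
  set c : ℝ := x₂ / x₁ with hc
  have hc1 : 1 ≤ c := (one_le_div hx₁).mpr hx
  have hs₁ : (0:ℝ) < x₁ * θ := mul_pos hx₁ hθ
  have hs₂ : (0:ℝ) < x₁ * l := mul_pos hx₁ hl
  have hs12 : x₁ * θ ≤ x₁ * l := by nlinarith
  have key := ratio_antitone hc1 (Set.mem_Ioi.mpr hs₁) (Set.mem_Ioi.mpr hs₂) hs12
  have hcs₁ : c * (x₁ * θ) = x₂ * θ := by rw [hc]; field_simp [hx₁.ne']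
  have hcs₂ : c * (x₁ * l) = x₂ * l := by rw [hc]; field_simp [hx₁.ne']
  simp only at key
  rw [hcs₁, hcs₂] at key
  have LA : (0:ℝ) < Real.log (1 + x₁ * θ) := Real.log_pos (by linarith)
  have LB : (0:ℝ) < Real.log (1 + x₂ * l) := Real.log_pos (by nlinarith)
  have LC : (0:ℝ) < Real.log (1 + x₂ * θ) := Real.log_pos (by nlinarith)
  have LD : (0:ℝ) < Real.log (1 + x₁ * l) := Real.log_pos (by nlinarith)
  -- key : log(1+x₂l)/log(1+x₁l) ≤ log(1+x₂θ)/log(1+x₁θ)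
  have hmul : Real.log (1 + x₂ * l) * Real.log (1 + x₁ * θ) ≤
      Real.log (1 + x₂ * θ) * Real.log (1 + x₁ * l) := by
    rw [div_le_div_iff₀ LD LA] at key
    linarith
  rw [ge_iff_le, div_mul_div_comm, div_mul_div_comm]
  have hnum : x₂ * θ * (x₁ * l) = x₁ * θ * (x₂ * l) := by ring
  rw [hnum]
  apply div_le_div_of_nonneg_left (by positivity) (by positivity)
  nlinarith
end

section
/- Let X be a positive random variable and let w(λ,·), for λ > 0, be a family of nondecreasing nonnegative weight functions on [0,∞) that is log-supermodular in (λ,x) (i.e., w(θ,x₁)·w(λ,x₂) ≥ w(θ,x₂)·w(λ,x₁) for θ ≤ λ, x₁ ≤ x₂). Assume for θ ≤ λ that the expectations E[w(θ,X)], E[w(λ,X)] are positive and E[X·w(θ,X)], E[X·w(λ,X)] are finite. Then H[θ,X] = E[X·w(θ,X)]/E[w(θ,X)] ≤ E[X·w(λ,X)]/E[w(λ,X)] = H[λ,X]. -/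
open MeasureTheory

theorem stmt_18 {Ω : Type*} [MeasurableSpace Ω] (μ : Measure Ω)
    [IsProbabilityMeasure μ] (X : Ω → ℝ) (hXm : Measurable X)
    (hX : ∀ ω, 0 < X ω)
    (w : ℝ → ℝ → ℝ)
    (hmono : ∀ l, 0 < l → MonotoneOn (w l) (Set.Ici 0))
    (hnn : ∀ l x, 0 < l → 0 ≤ x → 0 ≤ w l x)
    (hlsm : ∀ θ l x₁ x₂, 0 < θ → θ ≤ l → 0 ≤ x₁ → x₁ ≤ x₂ →
      w θ x₁ * w l x₂ ≥ w θ x₂ * w l x₁)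
    (θ l : ℝ) (hθ : 0 < θ) (hθl : θ ≤ l)
    (hθi : Integrable (fun ω => w θ (X ω)) μ)
    (hli : Integrable (fun ω => w l (X ω)) μ)
    (hθp : 0 < ∫ ω, w θ (X ω) ∂μ)
    (hlp : 0 < ∫ ω, w l (X ω) ∂μ)
    (hXθ : Integrable (fun ω => X ω * w θ (X ω)) μ)
    (hXl : Integrable (fun ω => X ω * w l (X ω)) μ) :
    (∫ ω, X ω * w θ (X ω) ∂μ) / (∫ ω, w θ (X ω) ∂μ) ≤
      (∫ ω, X ω * w l (X ω) ∂μ) / (∫ ω, w l (X ω) ∂μ) := by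
  have hnonneg : ∀ z : Ω × Ω,
      0 ≤ (X z.1 - X z.2) * (w l (X z.1) * w θ (X z.2) - w θ (X z.1) * w l (X z.2)) := by
    intro z
    rcases le_total (X z.2) (X z.1) with h | h
    · have := hlsm θ l (X z.2) (X z.1) hθ hθl (hX z.2).le h
      nlinarith
    · have := hlsm θ l (X z.1) (X z.2) hθ hθl (hX z.1).le h
      nlinarith
  have h1 : Integrable (fun z : Ω × Ω => (X z.1 * w l (X z.1)) * w θ (X z.2)) (μ.prod μ) :=
    hXl.mul_prod hθi
  have h2 : Integrable (fun z : Ω × Ω => (X z.1 * w θ (X z.1)) * w l (X z.2)) (μ.prod μ) :=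
    hXθ.mul_prod hli
  have h3 : Integrable (fun z : Ω × Ω => w l (X z.1) * (X z.2 * w θ (X z.2))) (μ.prod μ) :=
    hli.mul_prod hXθ
  have h4 : Integrable (fun z : Ω × Ω => w θ (X z.1) * (X z.2 * w l (X z.2))) (μ.prod μ) :=
    hθi.mul_prod hXl
  have hI : 0 ≤ ∫ z : Ω × Ω, (X z.1 - X z.2) *
      (w l (X z.1) * w θ (X z.2) - w θ (X z.1) * w l (X z.2)) ∂(μ.prod μ) :=
    integral_nonneg hnonneg
  have heq : (fun z : Ω × Ω => (X z.1 - X z.2) *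
      (w l (X z.1) * w θ (X z.2) - w θ (X z.1) * w l (X z.2)))
      = fun z : Ω × Ω =>
        ((X z.1 * w l (X z.1)) * w θ (X z.2) - (X z.1 * w θ (X z.1)) * w l (X z.2))
        - (w l (X z.1) * (X z.2 * w θ (X z.2)) - w θ (X z.1) * (X z.2 * w l (X z.2))) := by
    funext z; ring
  have h12 : Integrable (fun z : Ω × Ω =>
      (X z.1 * w l (X z.1)) * w θ (X z.2) - (X z.1 * w θ (X z.1)) * w l (X z.2)) (μ.prod μ) :=
    h1.sub h2
  have h34 : Integrable (fun z : Ω × Ω =>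
      w l (X z.1) * (X z.2 * w θ (X z.2)) - w θ (X z.1) * (X z.2 * w l (X z.2))) (μ.prod μ) :=
    h3.sub h4
  rw [heq, integral_sub h12 h34, integral_sub h1 h2, integral_sub h3 h4,
    MeasureTheory.integral_prod_mul (fun ω => X ω * w l (X ω)) (fun ω => w θ (X ω)),
    MeasureTheory.integral_prod_mul (fun ω => X ω * w θ (X ω)) (fun ω => w l (X ω)),
    MeasureTheory.integral_prod_mul (fun ω => w l (X ω)) (fun ω => X ω * w θ (X ω)),
    MeasureTheory.integral_prod_mul (fun ω => w θ (X ω)) (fun ω => X ω * w l (X ω))] at hI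
  rw [div_le_div_iff₀ hθp hlp]
  nlinarith [hI]
end

section
/- For every λ > 0, the limit as x ↓ 0 of the partial derivative in x of w₇(λ,x) = (log(1+x+λ)/(x+λ))·(x/log(1+x)) equals (2λ - λ·log(1+λ) - 2·log(1+λ) + λ²·log(1+λ))/(2λ²(1+λ)), and this quantity is positive. -/
open Filter Real

private lemma hd_log1p {x : ℝ} (hx : 0 < 1 + x) :
    HasDerivAt (fun y : ℝ => Real.log (1 + y)) (1 / (1 + x)) x := by
  have h := (Real.hasDerivAt_log (ne_of_gt hx)).comp x ((hasDerivAt_id x).const_add 1)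
  simpa [one_div, Function.comp_def] using h

private lemma log1p_tendsto : Tendsto (fun x : ℝ => Real.log (1 + x)) (nhdsWithin 0 (Set.Ioi 0)) (nhds 0) := by
  have h : ContinuousAt (fun x : ℝ => Real.log (1 + x)) 0 :=
    (hd_log1p (by norm_num)).continuousAt
  have := h.tendsto.mono_left (nhdsWithin_le_nhds (s := Set.Ioi 0))
  simpa using this

private lemma lim1 : Tendsto (fun x : ℝ => x / Real.log (1 + x)) (nhdsWithin 0 (Set.Ioi 0)) (nhds 1) := by
  apply HasDerivAt.lhopital_zero_nhdsGT (f' := fun _ => (1:ℝ)) (g' := fun x => 1/(1+x))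
  · exact Eventually.of_forall fun x => hasDerivAt_id x
  · filter_upwards [self_mem_nhdsWithin] with x hx
    exact hd_log1p (by simp at hx; linarith)
  · filter_upwards [self_mem_nhdsWithin] with x hx
    simp at hx; positivity
  · exact tendsto_id.mono_left nhdsWithin_le_nhds
  · exact log1p_tendsto
  · have h : Tendsto (fun x : ℝ => 1 + x) (nhdsWithin 0 (Set.Ioi 0)) (nhds 1) := by
      have h2 : Continuous (fun x : ℝ => 1 + x) := continuous_const.add continuous_id
      have := (h2.tendsto 0).mono_left (nhdsWithin_le_nhds (s := Set.Ioi 0))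
      simpa using this
    apply h.congr'
    filter_upwards [self_mem_nhdsWithin] with x hx
    have : (0:ℝ) < 1 + x := by simp at hx; linarith
    field_simp

private lemma lim2 : Tendsto (fun x : ℝ => (Real.log (1 + x) - x / (1 + x)) / Real.log (1 + x) ^ 2)
    (nhdsWithin 0 (Set.Ioi 0)) (nhds (1/2)) := by
  apply HasDerivAt.lhopital_zero_nhdsGT
    (f' := fun x => 1/(1+x) - (1*(1+x) - x*1)/(1+x)^2) (g' := fun x => 2 * Real.log (1+x) ^ 1 * (1/(1+x)))
  · filter_upwards [self_mem_nhdsWithin] with x hx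
    simp only [Set.mem_Ioi] at hx
    have h1 : (0:ℝ) < 1 + x := by linarith
    exact (hd_log1p h1).sub ((hasDerivAt_id x).div ((hasDerivAt_id x).const_add 1) (ne_of_gt h1))
  · filter_upwards [self_mem_nhdsWithin] with x hx
    simp only [Set.mem_Ioi] at hx
    have h1 : (0:ℝ) < 1 + x := by linarith
    exact (hd_log1p h1).pow 2
  · filter_upwards [self_mem_nhdsWithin] with x hx
    simp only [Set.mem_Ioi] at hx
    have h1 : (0:ℝ) < 1 + x := by linarith
    have h2 : 0 < Real.log (1 + x) := Real.log_pos (by linarith)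
    positivity
  · have : Tendsto (fun x : ℝ => Real.log (1 + x) - x / (1 + x)) (nhds 0) (nhds (Real.log (1+0) - 0/(1+0))) := by
      apply ContinuousAt.tendsto
      exact ((hd_log1p (by norm_num)).continuousAt).sub
        (ContinuousAt.div continuousAt_id (continuousAt_const.add continuousAt_id) (by norm_num))
    have := this.mono_left (nhdsWithin_le_nhds (s := Set.Ioi 0))
    simpa using this
  · have := (log1p_tendsto.pow 2)
    simpa using this
  · -- f'/g' = (x / log(1+x)) * (1/(2*(1+x)))
    have hmain : Tendsto (fun x : ℝ => (x / Real.log (1+x)) * (1/(2*(1+x))))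
        (nhdsWithin 0 (Set.Ioi 0)) (nhds (1 * (1/(2*(1+0))))) := by
      apply lim1.mul
      apply Tendsto.mono_left _ nhdsWithin_le_nhds
      exact (continuousAt_const.div (continuousAt_const.mul (continuousAt_const.add continuousAt_id)) (by norm_num)).tendsto
    have : (1:ℝ) * (1/(2*(1+0))) = 1/2 := by norm_num
    rw [this] at hmain
    apply hmain.congr'
    filter_upwards [self_mem_nhdsWithin] with x hx
    simp only [Set.mem_Ioi] at hx
    have h1 : (0:ℝ) < 1 + x := by linarith
    have h2 : Real.log (1 + x) ≠ 0 := ne_of_gt (Real.log_pos (by linarith))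
    field_simp
    ring

theorem stmt_19 (l : ℝ) (hl : 0 < l) :
    Tendsto
      (fun x : ℝ => deriv
        (fun x : ℝ => Real.log (1 + x + l) / (x + l) * (x / Real.log (1 + x))) x)
      (nhdsWithin 0 (Set.Ioi 0))
      (nhds ((2 * l - l * Real.log (1 + l) - 2 * Real.log (1 + l)
          + l ^ 2 * Real.log (1 + l)) / (2 * l ^ 2 * (1 + l)))) ∧
    0 < (2 * l - l * Real.log (1 + l) - 2 * Real.log (1 + l)
          + l ^ 2 * Real.log (1 + l)) / (2 * l ^ 2 * (1 + l)) := by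
  constructor
  · -- the limit
    set D : ℝ → ℝ := fun x =>
      (((1+x+l)⁻¹ * 1 * (x+l) - Real.log (1+x+l) * 1)/(x+l)^2) * (x / Real.log (1+x))
        + (Real.log (1+x+l)/(x+l)) * ((1 * Real.log (1+x) - x * (1/(1+x)))/(Real.log (1+x))^2)
      with hD
    have hderiv : ∀ x : ℝ, 0 < x →
        HasDerivAt (fun y : ℝ => Real.log (1 + y + l) / (y + l) * (y / Real.log (1 + y))) (D x) x := by
      intro x hx
      have hu : (0:ℝ) < 1 + x + l := by linarith
      have hv : (0:ℝ) < x + l := by linarith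
      have h1 : (0:ℝ) < 1 + x := by linarith
      have hL : Real.log (1 + x) ≠ 0 := ne_of_gt (Real.log_pos (by linarith))
      have G : HasDerivAt (fun y : ℝ => Real.log (1 + y + l)) ((1+x+l)⁻¹ * 1) x := by
        have h := (Real.hasDerivAt_log hu.ne').comp x (((hasDerivAt_id x).const_add 1).add_const l)
        simpa [Function.comp_def] using h
      have Gq : HasDerivAt (fun y : ℝ => Real.log (1 + y + l) / (y + l))
          (((1+x+l)⁻¹ * 1 * (x+l) - Real.log (1+x+l) * 1)/(x+l)^2) x :=
        G.div ((hasDerivAt_id x).add_const l) hv.ne'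
      have H : HasDerivAt (fun y : ℝ => y / Real.log (1 + y))
          ((1 * Real.log (1+x) - x * (1/(1+x)))/(Real.log (1+x))^2) x :=
        (hasDerivAt_id x).div (hd_log1p h1) hL
      exact Gq.mul H
    have hlimD : Tendsto D (nhdsWithin 0 (Set.Ioi 0))
        (nhds ((2 * l - l * Real.log (1 + l) - 2 * Real.log (1 + l)
          + l ^ 2 * Real.log (1 + l)) / (2 * l ^ 2 * (1 + l)))) := by
      have hul : (0:ℝ) < 1 + 0 + l := by linarith
      have cin : ContinuousAt (fun x : ℝ => 1 + x + l) 0 := by fun_prop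
      have cLog : ContinuousAt (fun x : ℝ => Real.log (1 + x + l)) 0 :=
        ContinuousAt.comp (f := fun x : ℝ => 1 + x + l) (x := 0) (Real.continuousAt_log hul.ne') cin
      have cvl : ContinuousAt (fun x : ℝ => x + l) 0 := by fun_prop
      have cA : ContinuousAt (fun x : ℝ => ((1+x+l)⁻¹ * 1 * (x+l) - Real.log (1+x+l) * 1)/(x+l)^2) 0 :=
        ((((cin.inv₀ hul.ne').mul continuousAt_const).mul cvl).sub (cLog.mul continuousAt_const)).div
          (cvl.pow 2) (by positivity)
      have cG : ContinuousAt (fun x : ℝ => Real.log (1+x+l)/(x+l)) 0 :=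
        cLog.div cvl (by positivity)
      have t1 : Tendsto (fun x : ℝ => (((1+x+l)⁻¹ * 1 * (x+l) - Real.log (1+x+l) * 1)/(x+l)^2) * (x / Real.log (1+x)))
          (nhdsWithin 0 (Set.Ioi 0))
          (nhds ((((1+0+l)⁻¹ * 1 * (0+l) - Real.log (1+0+l) * 1)/(0+l)^2) * 1)) :=
        (cA.tendsto.mono_left (nhdsWithin_le_nhds (s := Set.Ioi 0))).mul lim1
      have lim2' : Tendsto (fun x : ℝ => (1 * Real.log (1+x) - x * (1/(1+x)))/(Real.log (1+x))^2)
          (nhdsWithin 0 (Set.Ioi 0)) (nhds (1/2)) := by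
        apply lim2.congr
        intro x
        ring_nf
      have t2 : Tendsto (fun x : ℝ => (Real.log (1+x+l)/(x+l)) * ((1 * Real.log (1+x) - x * (1/(1+x)))/(Real.log (1+x))^2))
          (nhdsWithin 0 (Set.Ioi 0))
          (nhds ((Real.log (1+0+l)/(0+l)) * (1/2))) :=
        (cG.tendsto.mono_left (nhdsWithin_le_nhds (s := Set.Ioi 0))).mul lim2'
      have := t1.add t2
      convert this using 2
      have h1l : (0:ℝ) < 1 + l := by linarith
      norm_num
      field_simp
      ring
    apply hlimD.congr'
    filter_upwards [self_mem_nhdsWithin] with x hx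
    exact ((hderiv x hx).deriv).symm
  · -- positivity
    have h1l : (0:ℝ) < 1 + l := by linarith
    have hLpos : 0 < Real.log (1 + l) := Real.log_pos (by linarith)
    have hsinh : Real.log (1 + l) < Real.sinh (Real.log (1 + l)) :=
      Real.self_lt_sinh_iff.mpr hLpos
    rw [Real.sinh_log h1l] at hsinh
    have hinv : (1 + l) * (1 + l)⁻¹ = 1 := mul_inv_cancel₀ h1l.ne'
    have hlog' : 2 * (1 + l) * Real.log (1 + l) < l * (2 + l) := by nlinarith [hsinh, hinv, h1l]
    apply div_pos _ (by positivity)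
    rcases le_or_gt 2 l with h2 | h2
    · nlinarith [hLpos, mul_nonneg (by nlinarith : (0:ℝ) ≤ l^2 - l - 2) hLpos.le]
    · nlinarith [mul_lt_mul_of_pos_left hlog' (by linarith : (0:ℝ) < 2 - l),
        mul_pos (mul_pos hl hl) hl]
end
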